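/- arXiv:2411.00523 — 5 statements merged into one kernel-verified Lean document; each statement's English description precedes it below -/
import Mathlib

section
/- Let A, B, n be integers with AB ≠ 0 and n ≥ 2, and let F_{n,A,B}(x) = x^{2^n} + A·x^{3·2^{n-2}} + B·x^{2^{n-1}} + A·x^{2^{n-2}} + 1. Then the discriminant of F_{n,A,B} equals 2^{2^n(n-2)} · ((B+2-2A)(B+2+2A)(A^2-4B+8)^2)^{2^{n-2}}. -/
open Polynomial

/-- The quintinomial `F_{n,A,B}(x)`. -/
noncomputable def Quint (n : ℕ) (A B : ℤ) : Polynomial ℤ :=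
  X ^ (2 ^ n) + C A * X ^ (3 * 2 ^ (n - 2)) + C B * X ^ (2 ^ (n - 1)) +
    C A * X ^ (2 ^ (n - 2)) + 1

/-- The discriminant of a monic polynomial over `ℚ`, computed in its splitting field:
`disc f = (-1)^(d(d-1)/2) ∏ f'(rᵢ)` over the roots `rᵢ` of `f`. -/
noncomputable def polyDisc (f : Polynomial ℚ) : f.SplittingField :=
  (-1) ^ (f.natDegree * (f.natDegree - 1) / 2) *
    ((f.map (algebraMap ℚ f.SplittingField)).roots.map
      (fun r => (derivative (f.map (algebraMap ℚ f.SplittingField))).eval r)).prod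

lemma quartic_disc {K : Type*} [CommRing K] (a b y1 y2 y3 y4 : K)
    (h1 : y1+y2+y3+y4 = -a)
    (h2 : y1*y2+y1*y3+y1*y4+y2*y3+y2*y4+y3*y4 = b)
    (h3 : y1*y2*y3+y1*y2*y4+y1*y3*y4+y2*y3*y4 = -a)
    (h4 : y1*y2*y3*y4 = 1) :
    (4*y1^3+3*a*y1^2+2*b*y1+a)*((4*y2^3+3*a*y2^2+2*b*y2+a)*((4*y3^3+3*a*y3^2+2*b*y3+a)*(4*y4^3+3*a*y4^2+2*b*y4+a))) =
      (b+2-2*a)*(b+2+2*a)*(a^2-4*b+8)^2 := by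
  linear_combination
    ((-128)*b^2*(y1*y2*y3+y1*y2*y4+y1*y3*y4+y2*y3*y4)*(y1*y2*y3*y4) + 32*b^3*(y1+y2+y3+y4)*(y1*y2*y3*y4) + 192*a*(y1*y2*y3*y4)^2 + (-288)*a*b*(y1*y2*y3*y4)^2 + (-64)*a*b*(y1*y2*y3+y1*y2*y4+y1*y3*y4+y2*y3*y4)^2 + (-32)*a*b*(y1*y2+y1*y3+y1*y4+y2*y3+y2*y4+y3*y4)*(y1*y2*y3*y4) + (-16)*a*b^2*(y1*y2*y3*y4) + 48*a*b^2*(y1*y2+y1*y3+y1*y4+y2*y3+y2*y4+y3*y4)*(y1*y2*y3*y4) + 16*a*b^2*(y1+y2+y3+y4)*(y1*y2*y3+y1*y2*y4+y1*y3*y4+y2*y3*y4) + (-8)*a*b^3*(y1*y2*y3*y4) + (-48)*a^2*(y1*y2*y3+y1*y2*y4+y1*y3*y4+y2*y3*y4)*(y1*y2*y3*y4) + (-48)*a^2*(y1*y2+y1*y3+y1*y4+y2*y3+y2*y4+y3*y4)*(y1*y2*y3+y1*y2*y4+y1*y3*y4+y2*y3*y4) + 48*a^2*(y1+y2+y3+y4)*(y1*y2*y3*y4)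 + (-8)*a^2*b*(y1*y2*y3+y1*y2*y4+y1*y3*y4+y2*y3*y4) + 72*a^2*b*(y1*y2*y3+y1*y2*y4+y1*y3*y4+y2*y3*y4)*(y1*y2*y3*y4) + 24*a^2*b*(y1*y2+y1*y3+y1*y4+y2*y3+y2*y4+y3*y4)*(y1*y2*y3+y1*y2*y4+y1*y3*y4+y2*y3*y4) + (-72)*a^2*b*(y1+y2+y3+y4)*(y1*y2*y3*y4) + 8*a^2*b*(y1+y2+y3+y4)*(y1*y2+y1*y3+y1*y4+y2*y3+y2*y4+y3*y4) + (-4)*a^2*b^2*(y1*y2*y3+y1*y2*y4+y1*y3*y4+y2*y3*y4) + 12*a^3*(y1*y2*y3*y4) + 108*a^3*(y1*y2*y3*y4)^2 + 36*a^3*(y1*y2*y3+y1*y2*y4+y1*y3*y4+y2*y3*y4)^2 + (-12)*a^3*(y1*y2+y1*y3+y1*y4+y2*y3+y2*y4+y3*y4) + (-72)*a^3*(y1*y2+y1*y3+y1*y4+y2*y3+y2*y4+y3*y4)*(y1*y2*y3*y4) + 12*a^3*(y1*y2+y1*y3+y1*y4+y2*y3+y2*y4+y3*y4)^2 + (-24)*a^3*(y1+y2+y3+y4)*(y1*y2*y3+y1*y2*y4+y1*y3*y4+y2*y3*y4)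 + 4*a^3*(y1+y2+y3+y4)^2 + 2*a^3*b + 18*a^3*b*(y1*y2*y3*y4) + (-2)*a^3*b*(y1*y2+y1*y3+y1*y4+y2*y3+y2*y4+y3*y4) + 6*a^4*(y1*y2*y3+y1*y2*y4+y1*y3*y4+y2*y3*y4) + (-1)*a^4*(y1+y2+y3+y4) + a^5) * h1 +
    ((-256)*b*(y1*y2*y3*y4)^2 + 64*b^2*(y1*y2+y1*y3+y1*y4+y2*y3+y2*y4+y3*y4)*(y1*y2*y3*y4) + (-192)*a*(y1*y2*y3+y1*y2*y4+y1*y3*y4+y2*y3*y4)*(y1*y2*y3*y4) + 96*a*b*(y1*y2*y3+y1*y2*y4+y1*y3*y4+y2*y3*y4)*(y1*y2*y3*y4) + 32*a*b*(y1*y2+y1*y3+y1*y4+y2*y3+y2*y4+y3*y4)*(y1*y2*y3+y1*y2*y4+y1*y3*y4+y2*y3*y4) + (-48)*a^2*(y1*y2*y3*y4) + 144*a^2*(y1*y2*y3*y4)^2 + 48*a^2*(y1*y2*y3+y1*y2*y4+y1*y3*y4+y2*y3*y4)^2 + (-96)*a^2*(y1*y2+y1*y3+y1*y4+y2*y3+y2*y4+y3*y4)*(y1*y2*y3*y4)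 + 16*a^2*(y1*y2+y1*y3+y1*y4+y2*y3+y2*y4+y3*y4)^2 + 32*a^2*b*(y1*y2*y3*y4) + 4*a^2*b^2 + (-12)*a^2*b^2*(y1*y2*y3*y4) + 36*a^3*(y1*y2*y3+y1*y2*y4+y1*y3*y4+y2*y3*y4) + (-6)*a^3*b*(y1*y2*y3+y1*y2*y4+y1*y3*y4+y2*y3*y4) + 6*a^4 + 18*a^4*(y1*y2*y3*y4) + (-3)*a^4*(y1*y2+y1*y3+y1*y4+y2*y3+y2*y4+y3*y4) + (-1)*a^4*b) * h2 +
    (128*b*(y1*y2*y3+y1*y2*y4+y1*y3*y4+y2*y3*y4)*(y1*y2*y3*y4) + 192*a*(y1*y2*y3*y4)^2 + 64*a*(y1*y2*y3+y1*y2*y4+y1*y3*y4+y2*y3*y4)^2 + (-160)*a*b*(y1*y2*y3*y4) + 80*a*b^2*(y1*y2*y3*y4) + 8*a*b^3 + (-16)*a^2*(y1*y2*y3+y1*y2*y4+y1*y3*y4+y2*y3*y4) + 40*a^2*b*(y1*y2*y3+y1*y2*y4+y1*y3*y4+y2*y3*y4) + 28*a^3 + 12*a^3*(y1*y2*y3*y4)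 + (-14)*a^3*b + (-18)*a^3*b*(y1*y2*y3*y4) + (-2)*a^3*b^2 + (-9)*a^4*(y1*y2*y3+y1*y2*y4+y1*y3*y4+y2*y3*y4) + 3*a^5) * h3 +
    (256 + 256*(y1*y2*y3*y4) + 256*(y1*y2*y3*y4)^2 + (-128)*b^2 + (-128)*b^2*(y1*y2*y3*y4) + 16*b^4 + (-192)*a^2 + (-192)*a^2*(y1*y2*y3*y4) + 288*a^2*b + 144*a^2*b*(y1*y2*y3*y4) + (-80)*a^2*b^2 + (-4)*a^2*b^3 + (-33)*a^4 + (-27)*a^4*(y1*y2*y3*y4) + 18*a^4*b) * h4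

lemma splits_of_comp_X_pow {K : Type*} [Field K] {m : ℕ} (hm : m ≠ 0) :
    ∀ N (p : K[X]), p.natDegree ≤ N → (p.comp (X ^ m)).Splits →
      p.Splits := by
  intro N
  induction N with
  | zero =>
    intro p hd _
    exact Splits.of_natDegree_le_one (le_trans hd (by norm_num))
  | succ N ih =>
    intro p hd hs
    rcases Nat.eq_zero_or_pos p.natDegree with h0 | hpos
    · exact Splits.of_natDegree_le_one (by omega)
    · have hcompdeg : (p.comp (X ^ m)).natDegree = p.natDegree * m := by
        rw [natDegree_comp, natDegree_X_pow]
      have hne : p.comp (X ^ m) ≠ 0 := by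
        intro h
        rw [h, natDegree_zero] at hcompdeg
        have := Nat.pos_of_ne_zero hm
        nlinarith
      have hdne : (p.comp (X ^ m)).degree ≠ 0 := by
        apply degree_ne_of_natDegree_ne
        rw [hcompdeg]
        have := Nat.pos_of_ne_zero hm
        positivity
      obtain ⟨r, hr⟩ := Splits.exists_eval_eq_zero hs hdne
      have hroot : p.eval (r ^ m) = 0 := by
        have hr' : (p.comp (X ^ m)).eval r = 0 := hr
        simpa [eval_comp] using hr'
      have hdvd : (X - C (r ^ m)) ∣ p := dvd_iff_isRoot.mpr hroot
      obtain ⟨q, hq⟩ := hdvd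
      have hq0 : q ≠ 0 := by
        intro h; rw [h, mul_zero] at hq
        rw [hq, natDegree_zero] at hpos; omega
      have hdq : p.natDegree = 1 + q.natDegree := by
        rw [hq, natDegree_mul (X_sub_C_ne_zero _) hq0, natDegree_X_sub_C]
      have hqs : (q.comp (X ^ m)).Splits := by
        apply Splits.of_dvd hs hne
        exact ⟨(X - C (r ^ m)).comp (X ^ m), by rw [hq, mul_comp]; ring⟩
      have := ih q (by omega) hqs
      rw [hq]
      exact (Splits.X_sub_C _).mul this

lemma vieta4 {K : Type*} [CommRing K] {y1 y2 y3 y4 a b : K}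
    (h : (X - C y1) * ((X - C y2) * ((X - C y3) * (X - C y4))) =
        X ^ 4 + C a * X ^ 3 + C b * X ^ 2 + C a * X + 1) :
    y1 + y2 + y3 + y4 = -a ∧ y1*y2 + y1*y3 + y1*y4 + y2*y3 + y2*y4 + y3*y4 = b ∧
    y1*y2*y3 + y1*y2*y4 + y1*y3*y4 + y2*y3*y4 = -a ∧ y1*y2*y3*y4 = 1 := by
  have h' : (X : K[X]) ^ 4 - C (y1+y2+y3+y4) * X ^ 3
      + C (y1*y2 + y1*y3 + y1*y4 + y2*y3 + y2*y4 + y3*y4) * X ^ 2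
      - C (y1*y2*y3 + y1*y2*y4 + y1*y3*y4 + y2*y3*y4) * X + C (y1*y2*y3*y4)
      = X ^ 4 + C a * X ^ 3 + C b * X ^ 2 + C a * X + 1 := by
    rw [← h]; simp only [C_add, C_mul]; ring
  have e3 := congrArg (fun p => coeff p 3) h'
  have e2 := congrArg (fun p => coeff p 2) h'
  have e1 := congrArg (fun p => coeff p 1) h'
  have e0 := congrArg (fun p => coeff p 0) h'
  simp only [coeff_add, coeff_sub, coeff_C_mul, coeff_X_pow, coeff_C, coeff_X, coeff_one] at e3 e2 e1 e0
  norm_num at e3 e2 e1 e0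
  refine ⟨by linear_combination -e3, by linear_combination e2, by linear_combination -e1, by linear_combination e0⟩

theorem quint_disc (n : ℕ) (A B : ℤ) (hn : 2 ≤ n) (hAB : A * B ≠ 0) :
    polyDisc ((Quint n A B).map (algebraMap ℤ ℚ)) =
      ((2 ^ (2 ^ n * (n - 2)) *
        ((B + 2 - 2 * A) * (B + 2 + 2 * A) * (A ^ 2 - 4 * B + 8) ^ 2) ^ (2 ^ (n - 2)) : ℤ) :
        ((Quint n A B).map (algebraMap ℤ ℚ)).SplittingField) := by
  obtain ⟨k, rfl⟩ : ∃ k, n = k + 2 := ⟨n - 2, by omega⟩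
  set m : ℕ := 2 ^ k with hmdef
  have hm0 : m ≠ 0 := by rw [hmdef]; positivity
  set f : ℚ[X] := (Quint (k + 2) A B).map (algebraMap ℤ ℚ) with hf
  set Pq : ℚ[X] := X ^ 4 + C (A : ℚ) * X ^ 3 + C (B : ℚ) * X ^ 2 + C (A : ℚ) * X + 1 with hPq
  have hfc : f = Pq.comp (X ^ m) := by
    rw [hf, hPq]
    simp only [Quint, Polynomial.map_add, Polynomial.map_mul, Polynomial.map_pow,
      Polynomial.map_one, map_C, map_X, add_comp, mul_comp, pow_comp, C_comp, X_comp,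
      one_comp, Nat.add_sub_cancel, algebraMap_int_eq, eq_intCast, Polynomial.map_intCast,
      C_eq_intCast, Polynomial.intCast_comp]
    have e1 : (2:ℕ) ^ (k + 2) = m * 4 := by rw [hmdef]; ring
    have e2 : 3 * 2 ^ k = m * 3 := by rw [hmdef]; ring
    have e3 : (2:ℕ) ^ (k + 2 - 1) = m * 2 := by
      rw [show k + 2 - 1 = k + 1 from rfl, hmdef]; ring
    rw [e1, e2, e3, pow_mul, pow_mul, pow_mul]
  have hPqm : Pq.Monic := by rw [hPq]; monicity!
  have hPqd : Pq.natDegree = 4 := by rw [hPq]; compute_degree!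
  have hfm : f.Monic := by
    rw [hfc]
    have h := leadingCoeff_comp (p := Pq) (q := X ^ m) (by rwa [natDegree_X_pow])
    show (Pq.comp (X ^ m)).leadingCoeff = 1
    rw [h, hPqm.leadingCoeff, leadingCoeff_X_pow, one_pow, one_mul]
  have hfd : f.natDegree = 4 * m := by
    rw [hfc, natDegree_comp, natDegree_X_pow, hPqd]
  -- move to splitting field
  unfold polyDisc
  set K := f.SplittingField with hK
  set φ := algebraMap ℚ K with hφ
  set F := f.map φ with hF
  have hFs : F.Splits := SplittingField.splits f
  have hFm : F.Monic := hfm.map φ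
  have hFne : F ≠ 0 := hFm.ne_zero
  have hFd : F.natDegree = 4 * m := by rw [hF, natDegree_map, hfd]
  set a : K := φ ((A : ℚ)) with ha
  set b : K := φ ((B : ℚ)) with hb
  set Pk : K[X] := X ^ 4 + C a * X ^ 3 + C b * X ^ 2 + C a * X + 1 with hPk
  have hPkmap : Pq.map φ = Pk := by
    rw [hPq, hPk, ha, hb]
    simp only [Polynomial.map_add, Polynomial.map_mul, Polynomial.map_pow,
      Polynomial.map_one, map_C, map_X]
  have hFc : F = Pk.comp (X ^ m) := by
    have h1 : F = (Pq.comp (X ^ m)).map φ := congrArg (map φ) hfc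
    rw [h1, map_comp, Polynomial.map_pow, map_X, hPkmap]
  have hPkm : Pk.Monic := by rw [hPk]; monicity!
  have hPkd : Pk.natDegree = 4 := by rw [hPk]; compute_degree!
  have hPks : Pk.Splits :=
    splits_of_comp_X_pow hm0 Pk.natDegree Pk le_rfl (hFc ▸ hFs)
  have hScard : Multiset.card Pk.roots = 4 := by
    rw [splits_iff_card_roots.mp hPks, hPkd]
  -- extract the four roots
  obtain ⟨y1, hy1⟩ : ∃ y, y ∈ Pk.roots :=
    Multiset.card_pos_iff_exists_mem.mp (by rw [hScard]; norm_num)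
  obtain ⟨t1, ht1⟩ := Multiset.exists_cons_of_mem hy1
  have ht1card : Multiset.card t1 = 3 := by
    have := hScard; rw [ht1, Multiset.card_cons] at this; omega
  obtain ⟨y2, y3, y4, ht234⟩ := Multiset.card_eq_three.mp ht1card
  have hroots4 : Pk.roots = y1 ::ₘ (y2 ::ₘ y3 ::ₘ {y4}) := by
    rw [ht1, ht234]; rfl
  have hfac : (X - C y1) * ((X - C y2) * ((X - C y3) * (X - C y4))) = Pk := by
    conv_rhs => rw [hPks.eq_prod_roots_of_monic hPkm]
    rw [hroots4]
    simp [Multiset.map_cons, Multiset.prod_cons]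
  obtain ⟨hv1, hv2, hv3, hv4⟩ := vieta4 (hfac.trans hPk)
  set Qk : K[X] := C (4 : K) * X ^ 3 + C (3 * a) * X ^ 2 + C (2 * b) * X + C a with hQk
  -- factor F into the four pieces  X^m - C yᵢ
  have hFprod : F = (X ^ m - C y1) * ((X ^ m - C y2) * ((X ^ m - C y3) * (X ^ m - C y4))) := by
    rw [hFc, ← hfac]
    simp only [mul_comp, sub_comp, X_comp, C_comp]
  have hgmon : ∀ y : K, (X ^ m - C y).Monic := fun y => monic_X_pow_sub_C y hm0
  have hgne : ∀ y : K, (X ^ m - C y) ≠ 0 := fun y => (hgmon y).ne_zero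
  have hblock : ∀ y : K, (X ^ m - C y) ∣ F →
      ((X ^ m - C y).roots.map (fun r => Qk.eval (r ^ m))).prod = (Qk.eval y) ^ m := by
    intro y hdvd
    have hs := Splits.of_dvd hFs hFne hdvd
    have hcard : Multiset.card (X ^ m - C y).roots = m := by
      rw [splits_iff_card_roots.mp hs, natDegree_X_pow_sub_C]
    have hmem : ∀ r ∈ (X ^ m - C y).roots, r ^ m = y := by
      intro r hr
      have h := isRoot_of_mem_roots hr
      simpa [IsRoot, eval_sub, eval_pow, eval_X, eval_C, sub_eq_zero] using h
    rw [Multiset.map_congr rfl (fun r hr => by rw [hmem r hr])]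
    rw [Multiset.map_const', hcard, Multiset.prod_replicate]
  have hd1 : (X ^ m - C y1) ∣ F := ⟨_, hFprod⟩
  have hd2 : (X ^ m - C y2) ∣ F := ⟨(X ^ m - C y1) * ((X ^ m - C y3) * (X ^ m - C y4)), by rw [hFprod]; ring⟩
  have hd3 : (X ^ m - C y3) ∣ F := ⟨(X ^ m - C y1) * ((X ^ m - C y2) * (X ^ m - C y4)), by rw [hFprod]; ring⟩
  have hd4 : (X ^ m - C y4) ∣ F := ⟨(X ^ m - C y1) * ((X ^ m - C y2) * (X ^ m - C y3)), by rw [hFprod]; ring⟩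
  have hFroots : F.roots = (X ^ m - C y1).roots + ((X ^ m - C y2).roots + ((X ^ m - C y3).roots + (X ^ m - C y4).roots)) := by
    rw [hFprod, roots_mul (by rw [← hFprod]; exact hFne),
      roots_mul (mul_ne_zero (hgne y2) (mul_ne_zero (hgne y3) (hgne y4))),
      roots_mul (mul_ne_zero (hgne y3) (hgne y4))]
  have hFcard : Multiset.card F.roots = 4 * m := by
    rw [splits_iff_card_roots.mp hFs, hFd]
  -- product of all roots of F is 1
  have hprodroots : F.roots.prod = 1 := by
    have h0 := hFs.coeff_zero_eq_prod_roots_of_monic hFm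
    have hc0 : F.coeff 0 = 1 := by
      rw [coeff_zero_eq_eval_zero, hFc, eval_comp]
      simp [hPk, zero_pow hm0]
    rw [hc0, hFd] at h0
    have hev : (-1 : K) ^ (4 * m) = 1 := Even.neg_one_pow ⟨2 * m, by ring⟩
    rw [hev, one_mul] at h0
    exact h0.symm
  -- the derivative of F
  have hdPk : derivative Pk = Qk := by
    rw [hPk, hQk]
    simp only [derivative_add, derivative_mul, derivative_C, derivative_X_pow, derivative_X,
      derivative_one, C_mul, Nat.cast_ofNat]
    ring
  have hderF : derivative F = C (m : K) * X ^ (m - 1) * Qk.comp (X ^ m) := by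
    have h3 : derivative F = derivative (Pk.comp (X ^ m)) := congrArg derivative hFc
    rw [h3, derivative_comp, derivative_X_pow, hdPk]
  have heval : ∀ r : K, (derivative F).eval r = ((m : K) * r ^ (m - 1)) * Qk.eval (r ^ m) := by
    intro r
    rw [hderF]
    simp only [eval_mul, eval_pow, eval_C, eval_X, eval_comp]
  -- assemble the root product
  have hQeval : ∀ y : K, Qk.eval y = 4 * y ^ 3 + 3 * a * y ^ 2 + 2 * b * y + a := by
    intro y; rw [hQk]; simp only [eval_add, eval_mul, eval_pow, eval_C, eval_X]
  have hW : Qk.eval y1 * (Qk.eval y2 * (Qk.eval y3 * Qk.eval y4)) =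
      (b + 2 - 2 * a) * (b + 2 + 2 * a) * (a ^ 2 - 4 * b + 8) ^ 2 := by
    rw [hQeval, hQeval, hQeval, hQeval]
    exact quartic_disc a b y1 y2 y3 y4 hv1 hv2 hv3 hv4
  have hbig : (F.roots.map (fun r => (derivative F).eval r)).prod =
      (m : K) ^ (4 * m) *
        ((b + 2 - 2 * a) * (b + 2 + 2 * a) * (a ^ 2 - 4 * b + 8) ^ 2) ^ m := by
    rw [Multiset.map_congr rfl (fun r _ => heval r), Multiset.prod_map_mul]
    have hA1 : (F.roots.map (fun r => (m : K) * r ^ (m - 1))).prod = (m : K) ^ (4 * m) := by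
      rw [Multiset.prod_map_mul]
      rw [Multiset.map_const', hFcard, Multiset.prod_replicate]
      have hpw : (F.roots.map (fun r => r ^ (m - 1))).prod = F.roots.prod ^ (m - 1) := by
        have h := Multiset.prod_map_pow (m := F.roots) (f := fun r : K => r) (n := m - 1)
        simpa using h
      rw [hpw, hprodroots, one_pow, mul_one]
    have hA2 : (F.roots.map (fun r => Qk.eval (r ^ m))).prod =
        ((b + 2 - 2 * a) * (b + 2 + 2 * a) * (a ^ 2 - 4 * b + 8) ^ 2) ^ m := by
      rw [hFroots]
      simp only [Multiset.map_add, Multiset.prod_add]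
      rw [hblock y1 hd1, hblock y2 hd2, hblock y3 hd3, hblock y4 hd4, ← mul_pow, ← mul_pow, ← mul_pow, hW]
    rw [hA1, hA2]
  rw [hbig]
  -- the sign
  have hsign : (-1 : K) ^ (f.natDegree * (f.natDegree - 1) / 2) = 1 := by
    rw [hfd]
    apply Even.neg_one_pow
    set t := m * (4 * m - 1) with htdef
    have h4t : 4 * m * (4 * m - 1) = 4 * t := by rw [htdef]; ring
    exact ⟨t, by omega⟩
  rw [hsign, one_mul]
  -- final cast computation
  have haA : a = ((A : ℤ) : K) := by rw [ha, hφ, map_intCast]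
  have hbB : b = ((B : ℤ) : K) := by rw [hb, hφ, map_intCast]
  have hmK : (m : K) = (2 : K) ^ k := by rw [hmdef]; push_cast; ring
  rw [haA, hbB, hmK, Nat.add_sub_cancel]
  have hexp : (2 : ℕ) ^ (k + 2) = 4 * m := by rw [hmdef]; ring
  rw [hexp]
  push_cast
  rw [← pow_mul]
  ring
end

section
/- Let G(t) ∈ ℤ[t] be a product of N not-necessarily-distinct monic linear polynomials over ℤ, and let ℓ be a prime. If G(z) ≡ 0 (mod ℓ^2) for every z coprime to ℓ in ℤ/ℓ^2ℤ, then ℓ ≤ (N+2)/2. -/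
open Polynomial

theorem obstruction_bound (G : Polynomial ℤ) (N : ℕ) (l : List ℤ)
    (hlen : l.length = N) (hG : G = (l.map (fun a => X - C a)).prod)
    (ℓ : ℕ) (hℓ : ℓ.Prime)
    (hobs : ∀ z : ℤ, ¬ (ℓ : ℤ) ∣ z → ((ℓ : ℤ) ^ 2 ∣ G.eval z)) :
    2 * ℓ ≤ N + 2 := by
  haveI : Fact ℓ.Prime := ⟨hℓ⟩
  have hprime : Prime (ℓ : ℤ) := Nat.prime_iff_prime_int.mp hℓ
  have hℓ0 : (ℓ : ℤ) ≠ 0 := by exact_mod_cast hℓ.ne_zero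
  have heval : ∀ z : ℤ, G.eval z = (l.map (fun a => z - a)).prod := by
    intro z
    simp [hG, Polynomial.eval_list_prod, List.map_map, Function.comp_def]
  set m : List (ZMod ℓ) := l.map (Int.cast : ℤ → ZMod ℓ) with hm
  have hdvd_iff : ∀ z b : ℤ, (ℓ : ℤ) ∣ (z - b) ↔ ((b : ZMod ℓ) = (z : ZMod ℓ)) := by
    intro z b
    rw [← ZMod.intCast_zmod_eq_zero_iff_dvd]
    push_cast
    constructor <;> intro h <;> linear_combination -h
  have hnz : ∀ z : ℤ, (z : ZMod ℓ) ≠ 0 → ¬ (ℓ : ℤ) ∣ z := by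
    intro z h hd
    exact h ((ZMod.intCast_zmod_eq_zero_iff_dvd z ℓ).mpr hd)
  have key : ∀ r : ZMod ℓ, r ≠ 0 → 2 ≤ m.count r := by
    intro r hr
    by_contra hlt
    push_neg at hlt
    interval_cases hc : m.count r
    · -- count = 0 : no root ≡ r
      have hz : ((r.val : ℤ) : ZMod ℓ) = r := by
        push_cast
        simp [ZMod.natCast_val, ZMod.cast_id]
      have hd := hobs (r.val : ℤ) (hnz _ (by rw [hz]; exact hr))
      have hd1 : (ℓ : ℤ) ∣ G.eval (r.val : ℤ) := dvd_trans (dvd_pow_self _ two_ne_zero) hd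
      rw [heval] at hd1
      obtain ⟨x, hx, hdx⟩ := hprime.dvd_prod_iff.mp hd1
      obtain ⟨b, hb, rfl⟩ := List.mem_map.mp hx
      have : (b : ZMod ℓ) = r := by rw [(hdvd_iff _ b).mp hdx, hz]
      have : r ∈ m := List.mem_map.mpr ⟨b, hb, this⟩
      rw [← List.count_pos_iff, hc] at this
      exact lt_irrefl 0 this
    · -- count = 1 : exactly one root a ≡ r; take z = a + ℓ
      have hrm : r ∈ m := by rw [← List.count_pos_iff, hc]; norm_num
      obtain ⟨a, ha, har⟩ := List.mem_map.mp hrm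
      obtain ⟨s, t, rfl⟩ := List.append_of_mem ha
      set z : ℤ := a + ℓ with hzdef
      have hzr : (z : ZMod ℓ) = r := by
        push_cast [hzdef]
        simp [har]
      have hd := hobs z (hnz _ (by rw [hzr]; exact hr))
      rw [heval] at hd
      have hcount0 : (s.map (Int.cast : ℤ → ZMod ℓ)).count r = 0 ∧
          (t.map (Int.cast : ℤ → ZMod ℓ)).count r = 0 := by
        have := hc
        simp only [hm, List.map_append, List.map_cons, List.count_append,
          List.count_cons, har, beq_self_eq_true, if_true] at this
        omega
      have hfact : ((s ++ a :: t).map (fun b => z - b)).prod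
          = (ℓ : ℤ) * ((s.map (fun b => z - b)).prod * (t.map (fun b => z - b)).prod) := by
        simp only [List.map_append, List.map_cons, List.prod_append, List.prod_cons]
        have : z - a = (ℓ : ℤ) := by rw [hzdef]; ring
        rw [this]; ring
      rw [hfact, pow_two] at hd
      have hdc : (ℓ : ℤ) ∣ (s.map (fun b => z - b)).prod * (t.map (fun b => z - b)).prod :=
        (mul_dvd_mul_iff_left hℓ0).mp hd
      rcases hprime.dvd_mul.mp hdc with h | h <;>
      · obtain ⟨x, hx, hdx⟩ := hprime.dvd_prod_iff.mp h
        obtain ⟨b, hb, rfl⟩ := List.mem_map.mp hx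
        have hbr : (b : ZMod ℓ) = r := by rw [(hdvd_iff _ b).mp hdx, hzr]
        have : r ∈ (_ : List ℤ).map (Int.cast : ℤ → ZMod ℓ) := List.mem_map.mpr ⟨b, hb, hbr⟩
        rw [← List.count_pos_iff] at this
        omega
  -- counting
  have hlenm : m.length = N := by rw [hm, List.length_map, hlen]
  have hsum : ∑ r : ZMod ℓ, m.count r = N := by
    rw [← hlenm]
    have := Multiset.toFinset_sum_count_eq (m : Multiset (ZMod ℓ))
    rw [← Finset.sum_subset (Finset.subset_univ (m : Multiset (ZMod ℓ)).toFinset)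
      (fun x _ hx => by
        simpa using (Multiset.count_eq_zero.mpr (fun h => hx (Multiset.mem_toFinset.mpr h))))]
    simpa using this
  have hsub : ∑ r ∈ (Finset.univ.erase (0 : ZMod ℓ)), m.count r ≤ N := by
    rw [← hsum]
    exact Finset.sum_le_sum_of_subset (Finset.erase_subset _ _)
  have hlow : 2 * (ℓ - 1) ≤ ∑ r ∈ (Finset.univ.erase (0 : ZMod ℓ)), m.count r := by
    have hcard : (Finset.univ.erase (0 : ZMod ℓ)).card = ℓ - 1 := by
      rw [Finset.card_erase_of_mem (Finset.mem_univ _), Finset.card_univ, ZMod.card]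
    calc 2 * (ℓ - 1) = ∑ _r ∈ (Finset.univ.erase (0 : ZMod ℓ)), 2 := by
            rw [Finset.sum_const, hcard, smul_eq_mul, mul_comm]
      _ ≤ _ := Finset.sum_le_sum (fun r hrmem => key r (Finset.ne_of_mem_erase hrmem))
  have := hℓ.one_lt
  omega
end

section
/- The only integer solutions of y^2 = (A+9)(A+1)(A^2+6A+25) are those with A ∈ {-1, 0, -9, -11, 4}. -/
lemma aux_notsq (y n : ℤ) (hn : 0 ≤ n) (h1 : n ^ 2 < y ^ 2) (h2 : y ^ 2 < (n + 1) ^ 2) :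
    False := by
  have hz : 0 ≤ |y| := abs_nonneg y
  have hsq : |y| ^ 2 = y ^ 2 := sq_abs y
  have h3 : |y| ≤ n ∨ n + 1 ≤ |y| := by omega
  rcases h3 with h3 | h3
  · nlinarith
  · nlinarith

theorem quartic_integral_points :
    (∀ A y : ℤ, y ^ 2 = (A + 9) * (A + 1) * (A ^ 2 + 6 * A + 25) →
      A = -1 ∨ A = 0 ∨ A = -9 ∨ A = -11 ∨ A = 4) ∧
    (∀ A : ℤ, (A = -1 ∨ A = 0 ∨ A = -9 ∨ A = -11 ∨ A = 4) →
      ∃ y : ℤ, y ^ 2 = (A + 9) * (A + 1) * (A ^ 2 + 6 * A + 25)) := by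
  constructor
  · intro A y h
    have hf : y ^ 2 = A ^ 4 + 16 * A ^ 3 + 94 * A ^ 2 + 304 * A + 225 := by
      linear_combination h
    by_contra hc
    push_neg at hc
    obtain ⟨h1, h2, h3, h4, h5⟩ := hc
    rcases le_or_gt A (-40) with hA | hA
    · -- (A²+8A+14)² < f < (A²+8A+15)²
      exact aux_notsq y (A ^ 2 + 8 * A + 14) (by nlinarith) (by nlinarith) (by nlinarith)
    rcases le_or_gt A (-24) with hA2 | hA2
    · -- -39 ≤ A ≤ -24 : (A²+8A+13)² < f < (A²+8A+14)²
      exact aux_notsq y (A ^ 2 + 8 * A + 13) (by nlinarith) (by nlinarith) (by nlinarith)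
    rcases le_or_gt A (-18) with hA3 | hA3
    · -- -23 ≤ A ≤ -18 : (A²+8A+12)² < f < (A²+8A+13)²
      exact aux_notsq y (A ^ 2 + 8 * A + 12) (by nlinarith) (by nlinarith) (by nlinarith)
    rcases le_or_gt A (-10) with hA4 | hA4
    · -- -17 ≤ A ≤ -10, A ≠ -11 : finitely many values
      interval_cases A
      · exact aux_notsq y 164 (by norm_num) (by rw [hf]; norm_num) (by rw [hf]; norm_num)
      · exact aux_notsq y 139 (by norm_num) (by rw [hf]; norm_num) (by rw [hf]; norm_num)
      · exact aux_notsq y 115 (by norm_num) (by rw [hf]; norm_num) (by rw [hf]; norm_num)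
      · exact aux_notsq y 94 (by norm_num) (by rw [hf]; norm_num) (by rw [hf]; norm_num)
      · exact aux_notsq y 74 (by norm_num) (by rw [hf]; norm_num) (by rw [hf]; norm_num)
      · exact aux_notsq y 56 (by norm_num) (by rw [hf]; norm_num) (by rw [hf]; norm_num)
      · exact h4 rfl
      · exact aux_notsq y 24 (by norm_num) (by rw [hf]; norm_num) (by rw [hf]; norm_num)
    rcases le_or_gt A (-2) with hA5 | hA5
    · -- -9 < A ≤ -2 : f < 0
      have p1 : 1 ≤ A + 9 := by omega
      have p2 : 1 ≤ -(A + 1) := by omega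
      have p3 : (16 : ℤ) ≤ A ^ 2 + 6 * A + 25 := by nlinarith [sq_nonneg (A + 3)]
      nlinarith [sq_nonneg y, mul_le_mul p1 p2 (by norm_num : (0:ℤ) ≤ 1) (by omega : (0:ℤ) ≤ A + 9)]
    rcases le_or_gt A 0 with hA6 | hA6
    · omega
    rcases le_or_gt A 23 with hA7 | hA7
    · -- 1 ≤ A ≤ 23, A ≠ 4 : (A²+8A+16)² < f < (A²+8A+17)²
      have h44 : (A - 4) ^ 2 ≥ 1 := by
        have : A - 4 ≤ -1 ∨ 1 ≤ A - 4 := by omega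
        rcases this with h | h <;> nlinarith
      exact aux_notsq y (A ^ 2 + 8 * A + 16) (by nlinarith) (by nlinarith) (by nlinarith)
    · -- A ≥ 24 : (A²+8A+15)² < f < (A²+8A+16)²
      exact aux_notsq y (A ^ 2 + 8 * A + 15) (by nlinarith) (by nlinarith) (by nlinarith)
  · rintro A (rfl | rfl | rfl | rfl | rfl)
    exacts [⟨0, by norm_num⟩, ⟨15, by norm_num⟩, ⟨0, by norm_num⟩, ⟨40, by norm_num⟩,
      ⟨65, by norm_num⟩]
end

section
/- Let P, Q, R be pairwise coprime positive odd squarefree integers satisfying P^2Q^2 - 2PQ^2R + Q^2R^2 + 32PQ - 16PR + 32QR + 256 = 0. Then no such triple exists. -/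
theorem no_PQR_triple :
    ¬ ∃ P Q R : ℤ, 0 < P ∧ 0 < Q ∧ 0 < R ∧ Odd P ∧ Odd Q ∧ Odd R ∧
      Squarefree P ∧ Squarefree Q ∧ Squarefree R ∧
      IsCoprime P Q ∧ IsCoprime Q R ∧ IsCoprime P R ∧
      P ^ 2 * Q ^ 2 - 2 * P * Q ^ 2 * R + Q ^ 2 * R ^ 2 + 32 * P * Q - 16 * P * R +
        32 * Q * R + 256 = 0 := by
  rintro ⟨P, Q, R, hP, hQ, hR, hoP, hoQ, hoR, hsP, hsQ, hsR, hPQ, hQR, hPR, heq⟩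
  -- Step 1: P ∣ Q*R + 16
  have h1 : P ∣ Q * R + 16 := by
    rw [← hsP.dvd_pow_iff_dvd (n := 2) two_ne_zero]
    exact ⟨-(P * Q ^ 2) + 2 * Q ^ 2 * R - 32 * Q + 16 * R, by linear_combination heq⟩
  -- Step 2: R ∣ P*Q + 16
  have h2 : R ∣ P * Q + 16 := by
    rw [← hsR.dvd_pow_iff_dvd (n := 2) two_ne_zero]
    exact ⟨2 * P * Q ^ 2 - Q ^ 2 * R + 16 * P - 32 * Q, by linear_combination heq⟩
  -- Step 3: Q ∣ P*R - 16
  have hQ2 : IsCoprime Q (2 : ℤ) := by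
    obtain ⟨k, hk⟩ := hoQ
    exact ⟨1, -k, by linarith⟩
  have h3 : Q ∣ P * R - 16 := by
    have h16 : Q ∣ 16 * (P * R - 16) :=
      ⟨P ^ 2 * Q - 2 * P * Q * R + Q * R ^ 2 + 32 * P + 32 * R, by linear_combination -heq⟩
    have : IsCoprime Q (16 : ℤ) := by
      have := hQ2.pow_right (n := 4)
      norm_num at this
      exact this
    exact this.dvd_of_dvd_mul_left h16
  -- Step 4: P*R ∣ N where N = Q*(P-R)^2 + 16*(P+R)
  set N : ℤ := Q * (P - R) ^ 2 + 16 * (P + R) with hN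
  have hprod : P * R ∣ (Q * R + 16) * (P * Q + 16) :=
    hPR.mul_dvd (h1.mul_right _) (h2.mul_left _)
  have hQN : P * R ∣ Q * N := by
    have key : Q * N = P * R * (Q ^ 2 + 16) - (Q * R + 16) * (P * Q + 16) := by
      rw [hN]; linear_combination heq
    rw [key]
    exact dvd_sub (Dvd.intro _ rfl) hprod
  have hcopPRQ : IsCoprime (P * R) Q := hPQ.mul_left hQR.symm
  have hdvdN : P * R ∣ N := hcopPRQ.dvd_of_dvd_mul_left hQN
  obtain ⟨t, ht⟩ := hdvdN
  have hPRpos : 0 < P * R := mul_pos hP hR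
  have hNpos : 0 < N := by
    have : (0:ℤ) ≤ Q * (P - R) ^ 2 := mul_nonneg hQ.le (sq_nonneg _)
    rw [hN]; nlinarith
  have ht1 : 1 ≤ t := by
    by_contra h
    push_neg at h
    have : t ≤ 0 := by linarith
    nlinarith [mul_nonpos_of_nonneg_of_nonpos hPRpos.le this]
  -- Q*N = 16*P*R - 16*Q*(P+R) - 256, hence P*R*(16 - Q*t) = 16*Q*(P+R) + 256 > 0
  have hkey : P * R * (16 - Q * t) = 16 * Q * (P + R) + 256 := by
    have : Q * N = 16 * (P * R) - 16 * Q * (P + R) - 256 := by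
      rw [hN]; linear_combination heq
    rw [ht] at this
    linarith [this]
  have hQt : 1 ≤ 16 - Q * t := by
    by_contra h
    push_neg at h
    have h' : 16 - Q * t ≤ 0 := by linarith
    nlinarith [mul_nonpos_of_nonneg_of_nonpos hPRpos.le h']
  -- s with P*R - 16 = Q*s, s odd
  obtain ⟨s, hs⟩ := h3
  have hsodd : Odd s := by
    have hodd : Odd (Q * s) := by
      rw [← hs]
      rcases hoP with ⟨a, ha⟩
      rcases hoR with ⟨b, hb⟩
      exact ⟨2*a*b + a + b - 8, by rw [ha, hb]; ring⟩
    exact (Int.odd_mul.mp hodd).2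
  -- Key identity: Q*s*t = 16*(s - t - P - R)
  have hid : Q * (Q * (s * t)) = Q * (16 * (s - t - P - R)) := by
    have e1 : (Q * s + 16) * (16 - Q * t) = 16 * Q * (P + R) + 256 := by
      rw [← hs]; linarith [hkey]
    ring_nf
    ring_nf at e1
    nlinarith [e1]
  have hid' : Q * (s * t) = 16 * (s - t - P - R) :=
    mul_left_cancel₀ (by positivity) hid
  -- 16 ∣ Q * s * t, with Q*s odd, so 16 ∣ t
  have h16dvd : (16 : ℤ) ∣ (Q * s) * t := ⟨s - t - P - R, by linarith [hid']⟩
  have hQsodd : Odd (Q * s) := Int.odd_mul.mpr ⟨hoQ, hsodd⟩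
  have hcop16 : IsCoprime (16 : ℤ) (Q * s) := by
    obtain ⟨k, hk⟩ := hQsodd
    have h2c : IsCoprime (2 : ℤ) (Q * s) := ⟨-k, 1, by linarith⟩
    have : IsCoprime ((2:ℤ) ^ 4) (Q * s) := h2c.pow_left
    norm_num at this
    exact this
  have h16t : (16 : ℤ) ∣ t := hcop16.dvd_of_dvd_mul_left h16dvd
  have ht16 : 16 ≤ t := Int.le_of_dvd (by linarith) h16t
  nlinarith [hQt, ht16, hQ]
end

section
/- Let n ≥ 3 and suppose F_{n,A,B}(x) is monogenic, i.e., it is irreducible over ℚ and for a root θ, ℤ[θ] is the full ring of integers of ℚ(θ). Then F_{n-1,A,B}(x) is monogenic. -/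
open Polynomial IntermediateField

/-- A monic integer polynomial is monogenic if it is irreducible over `ℚ` and for every
root `θ` of it in a field extension of `ℚ`, `ℤ[θ]` is the integral closure of `ℤ` in
`ℚ(θ)`; here we work inside `K = ℚ(θ)` itself, so the condition reads
`Algebra.adjoin ℤ {θ} = integralClosure ℤ K`. -/
def Monogenic (f : Polynomial ℤ) : Prop :=
  Irreducible (f.map (algebraMap ℤ ℚ)) ∧
    ∀ (K : Type) (_ : Field K) (_ : Algebra ℚ K) (θ : K),
      aeval θ (f.map (algebraMap ℤ ℚ)) = 0 → (⊤ : IntermediateField ℚ K) = ℚ⟮θ⟯ →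
        Algebra.adjoin ℤ {θ} = integralClosure ℤ K

lemma quint_comp (n : ℕ) (hn : 3 ≤ n) (A B : ℤ) :
    Quint n A B = (Quint (n - 1) A B).comp (X ^ 2) := by
  obtain ⟨k, rfl⟩ : ∃ k, n = k + 3 := ⟨n - 3, by omega⟩
  show Quint (k+3) A B = (Quint (k+2) A B).comp (X ^ 2)
  have ha : 2*(2:ℕ)^(k+2) = 2^(k+3) := by ring
  have hb : 2*(3*(2:ℕ)^k) = 3*2^(k+1) := by ring
  have hc : 2*(2:ℕ)^(k+1) = 2^(k+2) := by ring
  have hd : 2*(2:ℕ)^k = 2^(k+1) := by ring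
  simp only [Quint, add_comp, mul_comp, C_comp, pow_comp, X_comp, one_comp, ← pow_mul,
    Nat.add_sub_cancel, show k+3-2 = k+1 from rfl, show k+2-2 = k from rfl,
    show k+3-1 = k+2 from rfl, show k+2-1 = k+1 from rfl, ha, hb, hc, hd]

lemma quint_eq (k : ℕ) (A B : ℤ) : Quint (k+2) A B =
    X^(4*2^k) + (C A * X^(3*2^k) + C B * X^(2*2^k) + C A * X^(2^k) + 1) := by
  unfold Quint
  rw [show k+2-2 = k from rfl, show k+2-1 = k+1 from rfl,
    show (2:ℕ)^(k+2) = 4*2^k by ring, show (2:ℕ)^(k+1) = 2*2^k by ring]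
  ring

lemma quint_monic (n : ℕ) (hn : 2 ≤ n) (A B : ℤ) : (Quint n A B).Monic := by
  obtain ⟨k, rfl⟩ : ∃ k, n = k + 2 := ⟨n - 2, by omega⟩
  rw [quint_eq]
  apply monic_X_pow_add
  have h0 : 0 < (2:ℕ)^k := Nat.pow_pos (by norm_num)
  have hle : (C A * X^(3*2^k) + C B * X^(2*2^k) + C A * X^(2^k) + 1 : ℤ[X]).degree
      ≤ ((3*2^k : ℕ) : WithBot ℕ) := by
    compute_degree
    all_goals try { push_cast; omega }
    · norm_num
  exact lt_of_le_of_lt hle (by exact_mod_cast (by omega : 3*2^k < 4*2^k))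

lemma quint_natDegree (n : ℕ) (hn : 2 ≤ n) (A B : ℤ) : (Quint n A B).natDegree = 2^n := by
  obtain ⟨k, rfl⟩ : ∃ k, n = k + 2 := ⟨n - 2, by omega⟩
  show (Quint (k+2) A B).natDegree = 2^(k+2)
  have h0 : 0 < (2:ℕ)^k := Nat.pow_pos (by norm_num)
  have e4 : (2:ℕ)^(k+2) = 4 * 2^k := by ring
  have e2 : (2:ℕ)^(k+1) = 2 * 2^k := by ring
  unfold Quint
  compute_degree!
  all_goals simp only [e4, e2, show k+2-2 = k from rfl, show k+2-1 = k+1 from rfl] at *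
  all_goals omega

lemma unit_of_comp_unit {a : ℚ[X]} (ha : a ≠ 0) (hu : IsUnit (a.comp (X^2))) : IsUnit a := by
  obtain ⟨r, hr, hrq⟩ := Polynomial.isUnit_iff.mp hu
  have hdeg : a.natDegree * 2 = 0 := by
    have := natDegree_comp (p := a) (q := (X^2 : ℚ[X]))
    rw [← hrq, natDegree_C, natDegree_X_pow] at this
    omega
  have h0 : a.natDegree = 0 := by omega
  rw [eq_C_of_natDegree_eq_zero h0]
  refine isUnit_C.mpr (isUnit_iff_ne_zero.mpr ?_)
  intro hc
  exact ha (by rw [eq_C_of_natDegree_eq_zero h0, hc, map_zero])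

theorem monogenic_descent (n : ℕ) (hn : 3 ≤ n) (A B : ℤ) (hAB : A * B ≠ 0)
    (h : Monogenic (Quint n A B)) : Monogenic (Quint (n - 1) A B) := by
  have hn1 : 2 ≤ n - 1 := by omega
  set f := Quint n A B with hf
  set g := Quint (n-1) A B with hg
  have hcomp : f = g.comp (X ^ 2) := quint_comp n hn A B
  have hgmonic : g.Monic := quint_monic _ hn1 A B
  have hfmonic : f.Monic := quint_monic _ (by omega) A B
  have hgdeg : g.natDegree = 2^(n-1) := quint_natDegree _ hn1 A B
  have hfdeg : f.natDegree = 2^n := quint_natDegree _ (by omega) A B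
  set q := g.map (algebraMap ℤ ℚ) with hq
  set p := f.map (algebraMap ℤ ℚ) with hp
  have hqmonic : q.Monic := hgmonic.map _
  have hpmonic : p.Monic := hfmonic.map _
  have hpq : p = q.comp (X ^ 2) := by
    rw [hp, hcomp, map_comp]
    simp [hq]
  have hq0 : q ≠ 0 := hqmonic.ne_zero
  have hqdeg : q.natDegree = 2^(n-1) := by rw [hq, hgmonic.natDegree_map, hgdeg]
  have hpdeg : p.natDegree = 2^n := by rw [hp, hfmonic.natDegree_map, hfdeg]
  have hqirr : Irreducible q := by
    constructor
    · intro hu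
      apply h.1.not_isUnit
      show IsUnit p
      rw [hpq]
      obtain ⟨r, hr, hrq⟩ := Polynomial.isUnit_iff.mp hu
      rw [← hrq, C_comp]
      exact isUnit_C.mpr hr
    · intro a b hab
      have hp' : p = (a.comp (X^2)) * (b.comp (X^2)) := by rw [hpq, hab, mul_comp]
      have ha : a ≠ 0 := fun h0 => hq0 (by rw [hab, h0, zero_mul])
      have hb : b ≠ 0 := fun h0 => hq0 (by rw [hab, h0, mul_zero])
      rcases h.1.isUnit_or_isUnit hp' with hu | hu
      · exact Or.inl (unit_of_comp_unit ha hu)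
      · exact Or.inr (unit_of_comp_unit hb hu)
  refine ⟨hqirr, ?_⟩
  intro K _ algK θ hθ htop
  -- basic facts about θ
  have hminθ : minpoly ℚ θ = q := (minpoly.eq_of_irreducible_of_monic hqirr hθ hqmonic).symm
  have hθint : IsIntegral ℚ θ := ⟨q, hqmonic, by rw [← aeval_def]; exact hθ⟩
  have hadj : Algebra.adjoin ℚ {θ} = ⊤ := by
    have h2 := congrArg IntermediateField.toSubalgebra htop
    rw [IntermediateField.top_toSubalgebra,
      IntermediateField.adjoin_simple_toSubalgebra_of_isAlgebraic hθint.isAlgebraic] at h2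
    exact h2.symm
  haveI hFD : FiniteDimensional ℚ K := by
    exact Module.finite_def.mpr
      (by rw [← Algebra.top_toSubmodule, ← hadj]; exact hθint.fg_adjoin_singleton)
  have hrank : Module.finrank ℚ K = 2^(n-1) := by
    have h1 := (Field.primitive_element_iff_minpoly_natDegree_eq ℚ θ).mp htop.symm
    rw [hminθ, hqdeg] at h1
    exact h1.symm
  -- θ is not a square in K
  have hnosq : ∀ c : K, c ^ 2 ≠ θ := by
    intro c hc
    have hc' : aeval c p = 0 := by rw [hpq, aeval_comp]; simp [hc, hθ]; exact hθ
    have hmin : minpoly ℚ c = p := (minpoly.eq_of_irreducible_of_monic h.1 hc' hpmonic).symm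
    have h1 : (minpoly ℚ c).natDegree ≤ Module.finrank ℚ K := minpoly.natDegree_le c
    rw [hmin, hpdeg, hrank] at h1
    have h2 : 2^(n-1) < 2^n := Nat.pow_lt_pow_right (by norm_num) (by omega)
    omega
  -- the quadratic extension
  set P : K[X] := X ^ 2 - Polynomial.C θ with hP
  have hPirr : Irreducible P := X_pow_sub_C_irreducible_of_prime Nat.prime_two hnosq
  haveI := Fact.mk hPirr
  set L := AdjoinRoot P with hL
  set φ : L := AdjoinRoot.root P with hφ
  set ι : K →+* L := algebraMap K L with hι
  have hιinj : Function.Injective ι := ι.injective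
  have hφ2 : φ ^ 2 = ι θ := by
    have h0 := AdjoinRoot.eval₂_root P
    rw [hP] at h0
    simp only [eval₂_sub, eval₂_X_pow, eval₂_C] at h0
    rw [sub_eq_zero] at h0
    rw [hφ, hι, AdjoinRoot.algebraMap_eq]
    exact h0
  haveI hTZ : IsScalarTower ℤ K L :=
    IsScalarTower.of_algebraMap_eq (by intro x; simp [map_intCast])
  have hφroot : aeval φ p = 0 := by
    rw [hpq, aeval_comp]
    simp only [map_pow, aeval_X]
    rw [hφ2, hι, Polynomial.aeval_algebraMap_apply, hθ, map_zero]
  have hmemφ : ∀ x : L, x ∈ ℚ⟮φ⟯ := by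
    intro x
    have hx : x ∈ Algebra.adjoin K {φ} := by rw [AdjoinRoot.adjoinRoot_eq_top]; trivial
    induction hx using Algebra.adjoin_induction with
    | mem y hy => rw [Set.mem_singleton_iff] at hy; subst hy; exact mem_adjoin_simple_self ℚ φ
    | algebraMap k =>
      have hk : k ∈ (⊤ : IntermediateField ℚ K) := trivial
      rw [htop] at hk
      have h2 : algebraMap K L k ∈ (ℚ⟮θ⟯.map (IsScalarTower.toAlgHom ℚ K L)) :=
        ⟨k, hk, rfl⟩
      rw [IntermediateField.adjoin_map, Set.image_singleton] at h2
      have h3 : ℚ⟮(IsScalarTower.toAlgHom ℚ K L) θ⟯ ≤ ℚ⟮φ⟯ := by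
        rw [adjoin_simple_le_iff]
        show ι θ ∈ ℚ⟮φ⟯
        rw [← hφ2]
        exact pow_mem (mem_adjoin_simple_self ℚ φ) 2
      exact h3 h2
    | add a b _ _ ha hb => exact add_mem ha hb
    | mul a b _ _ ha hb => exact mul_mem ha hb
  have htopL : (⊤ : IntermediateField ℚ L) = ℚ⟮φ⟯ :=
    (top_unique (fun x _ => hmemφ x)).symm
  have key := h.2 L inferInstance inferInstance φ hφroot htopL
  have split : ∀ G : Polynomial ℤ, ∃ ge go : Polynomial ℤ,
      aeval φ G = ι (aeval θ ge) + φ * ι (aeval θ go) := by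
    intro G
    induction G using Polynomial.induction_on' with
    | add r s hr hs =>
      obtain ⟨ge1, go1, h1⟩ := hr; obtain ⟨ge2, go2, h2⟩ := hs
      refine ⟨ge1 + ge2, go1 + go2, ?_⟩
      rw [map_add, h1, h2]
      simp only [map_add]
      ring
    | monomial m a =>
      rcases Nat.even_or_odd m with ⟨t, ht⟩ | ⟨t, ht⟩
      · refine ⟨Polynomial.monomial t a, 0, ?_⟩
        subst ht
        rw [show t + t = 2 * t from (two_mul t).symm]
        simp only [aeval_monomial, map_zero, mul_zero, add_zero, map_mul, map_pow]
        rw [pow_mul, hφ2, hι, ← IsScalarTower.algebraMap_apply ℤ K L]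
      · refine ⟨0, Polynomial.monomial t a, ?_⟩
        subst ht
        simp only [aeval_monomial, map_zero, zero_add, map_mul, map_pow]
        rw [pow_succ, pow_mul, hφ2, hι, ← IsScalarTower.algebraMap_apply ℤ K L]
        ring
  apply le_antisymm
  · rw [Algebra.adjoin_le_iff]
    rw [Set.singleton_subset_iff]
    show IsIntegral ℤ θ
    refine ⟨g, hgmonic, ?_⟩
    rw [← aeval_def]
    rwa [Polynomial.aeval_map_algebraMap] at hθ
  · intro x hx
    have hxint : IsIntegral ℤ x := hx
    have hxL : IsIntegral ℤ (ι x) := hxint.map (IsScalarTower.toAlgHom ℤ K L)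
    have hxmem : ι x ∈ Algebra.adjoin ℤ {φ} := (SetLike.ext_iff.mp key (ι x)).mpr hxL
    rw [Algebra.adjoin_singleton_eq_range_aeval, AlgHom.mem_range] at hxmem
    obtain ⟨G, hG⟩ := hxmem
    obtain ⟨ge, go, hsplit⟩ := split G
    rw [hsplit] at hG
    by_cases hb : aeval θ go = 0
    · have h1 : ι (aeval θ ge) = ι x := by rw [← hG, hb, map_zero, mul_zero, add_zero]
      have hxe : x = aeval θ ge := (hιinj h1).symm
      rw [Algebra.adjoin_singleton_eq_range_aeval, AlgHom.mem_range]
      exact ⟨ge, hxe.symm⟩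
    · exfalso
      set b := aeval θ go with hbdef
      set c := (x - aeval θ ge) / b with hcdef
      have hcb : c * b = x - aeval θ ge := div_mul_cancel₀ _ hb
      have hιb : ι b ≠ 0 := fun h0 => hb (hιinj (h0.trans (map_zero ι).symm))
      have hφc : φ = ι c := by
        have h1 : φ * ι b = ι (x - aeval θ ge) := by
          rw [map_sub, ← hG]; ring
        have h2 : ι c * ι b = ι (x - aeval θ ge) := by rw [← map_mul, hcb]
        exact mul_right_cancel₀ hιb (h1.trans h2.symm)
      apply hnosq c
      apply hιinj
      rw [map_pow, ← hφc, hφ2]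
end
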